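/- Under hypotheses (F1) and (F2), the limit of f(G⁻¹(t)) / (t · g(G⁻¹(t))) as t → +∞ equals +∞. -/

import Mathlib

open Real Filter Topology MeasureTheory

/-- The piecewise function `g` from the paper: `g(t) = sqrt(1 - κ t^2)` for `|t| < sqrt(1/(3κ))`,
and `g(t) = 1/(3 sqrt(2κ) |t|) + sqrt(1/6)` for `|t| ≥ sqrt(1/(3κ))`; in particular `g` is even. -/
noncomputable def gfun (κ : ℝ) (t : ℝ) : ℝ :=
  if |t| < Real.sqrt (1 / (3 * κ)) then Real.sqrt (1 - κ * t ^ 2)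
  else 1 / (3 * Real.sqrt (2 * κ) * |t|) + Real.sqrt (1 / 6)

/-- `G(t) = ∫ s in [0,t], g(s) ds`. -/
noncomputable def Gfun (κ : ℝ) (t : ℝ) : ℝ := ∫ s in (0:ℝ)..t, gfun κ s

/-- `G⁻¹`, the inverse function of `G`. -/
noncomputable def Ginv (κ : ℝ) : ℝ → ℝ := Function.invFun (Gfun κ)

lemma sq_lt_of_abs_lt_sqrt {t c : ℝ} (hc : 0 ≤ c) (h : |t| < Real.sqrt c) :
    t ^ 2 < c := by
  have h1 : |t| ^ 2 < Real.sqrt c ^ 2 := by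
    apply pow_lt_pow_left₀ h (abs_nonneg t)
    norm_num
  rwa [sq_abs, Real.sq_sqrt hc] at h1

lemma gfun_lb (κ : ℝ) (hκ : 0 < κ) (t : ℝ) : Real.sqrt (1 / 6) ≤ gfun κ t := by
  unfold gfun
  split_ifs with h
  · have h2 : t ^ 2 < 1 / (3 * κ) := sq_lt_of_abs_lt_sqrt (by positivity) h
    have h3 : κ * t ^ 2 < 1 / 3 := by
      have := mul_lt_mul_of_pos_left h2 hκ
      calc κ * t ^ 2 < κ * (1 / (3 * κ)) := this
        _ = 1 / 3 := by field_simp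
    apply Real.sqrt_le_sqrt
    linarith
  · have : 0 ≤ 1 / (3 * Real.sqrt (2 * κ) * |t|) := by positivity
    linarith

lemma gfun_pos (κ : ℝ) (hκ : 0 < κ) (t : ℝ) : 0 < gfun κ t := by
  have := gfun_lb κ hκ t
  have h6 : 0 < Real.sqrt (1 / 6) := Real.sqrt_pos.mpr (by norm_num)
  linarith

lemma gfun_le_one (κ : ℝ) (hκ : 0 < κ) (t : ℝ) : gfun κ t ≤ 1 := by
  unfold gfun
  split_ifs with h
  · calc Real.sqrt (1 - κ * t ^ 2) ≤ Real.sqrt 1 := by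
          apply Real.sqrt_le_sqrt; nlinarith [sq_nonneg t, hκ.le]
      _ = 1 := Real.sqrt_one
  · push_neg at h
    have ha : 0 < Real.sqrt (1 / (3 * κ)) := Real.sqrt_pos.mpr (by positivity)
    have ht : 0 < |t| := lt_of_lt_of_le ha h
    have key : 1 / (3 * Real.sqrt (2 * κ) * |t|) ≤ Real.sqrt (1 / 6) := by
      rw [div_le_iff₀ (by positivity)]
      have h1 : Real.sqrt (2 * κ) * |t| ≥ Real.sqrt (2 * κ) * Real.sqrt (1 / (3 * κ)) :=
        mul_le_mul_of_nonneg_left h (Real.sqrt_nonneg _)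
      have h2 : Real.sqrt (2 * κ) * Real.sqrt (1 / (3 * κ)) = Real.sqrt (2 / 3) := by
        rw [← Real.sqrt_mul (by positivity)]
        congr 1
        field_simp
      have h3 : Real.sqrt (1 / 6) * Real.sqrt (2 / 3) = 1 / 3 := by
        rw [← Real.sqrt_mul (by norm_num)]
        rw [show (1/6 : ℝ) * (2/3) = (1/3)^2 by norm_num, Real.sqrt_sq (by norm_num)]
      have h6 : 0 < Real.sqrt (1 / 6) := Real.sqrt_pos.mpr (by norm_num)
      calc (1:ℝ) = Real.sqrt (1/6) * (3 * Real.sqrt (2/3)) := by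
            rw [show Real.sqrt (1/6) * (3 * Real.sqrt (2/3)) = 3 * (Real.sqrt (1/6) * Real.sqrt (2/3)) by ring, h3]; norm_num
        _ ≤ Real.sqrt (1/6) * (3 * (Real.sqrt (2*κ) * |t|)) := by
            apply mul_le_mul_of_nonneg_left _ h6.le
            rw [h2] at h1; linarith
        _ = Real.sqrt (1/6) * (3 * Real.sqrt (2*κ) * |t|) := by ring
    have h4 : Real.sqrt (1/6) ≤ 1/2 := by
      rw [show (1/6:ℝ) = 1/6 from rfl]
      calc Real.sqrt (1/6) ≤ Real.sqrt (1/4) := Real.sqrt_le_sqrt (by norm_num)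
        _ = 1/2 := by rw [show (1/4:ℝ) = (1/2)^2 by norm_num, Real.sqrt_sq (by norm_num)]
    linarith

lemma gfun_measurable (κ : ℝ) : Measurable (gfun κ) := by
  unfold gfun
  apply Measurable.ite
  · exact measurableSet_lt (by fun_prop) measurable_const
  · fun_prop
  · fun_prop

lemma gfun_intble (κ : ℝ) (hκ : 0 < κ) (a b : ℝ) :
    IntervalIntegrable (gfun κ) volume a b := by
  rw [intervalIntegrable_iff]
  apply MeasureTheory.Integrable.mono' (g := fun _ => (1:ℝ))
    (integrableOn_const (C := (1:ℝ)) measure_Ioc_lt_top.ne (by simp))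
  · exact (gfun_measurable κ).aestronglyMeasurable.restrict
  · filter_upwards with t
    rw [Real.norm_eq_abs, abs_of_pos (gfun_pos κ hκ t)]
    exact gfun_le_one κ hκ t

lemma Gfun_sub (κ : ℝ) (hκ : 0 < κ) (a b : ℝ) :
    Gfun κ b - Gfun κ a = ∫ s in a..b, gfun κ s := by
  have := intervalIntegral.integral_add_adjacent_intervals
    (gfun_intble κ hκ 0 a) (gfun_intble κ hκ a b)
  unfold Gfun
  linarith

lemma Gfun_lb (κ : ℝ) (hκ : 0 < κ) {a b : ℝ} (hab : a ≤ b) :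
    Real.sqrt (1/6) * (b - a) ≤ Gfun κ b - Gfun κ a := by
  rw [Gfun_sub κ hκ a b]
  have h1 : ∫ _ in a..b, Real.sqrt (1/6) ≤ ∫ s in a..b, gfun κ s :=
    intervalIntegral.integral_mono_on hab intervalIntegrable_const (gfun_intble κ hκ a b)
      (fun x _ => gfun_lb κ hκ x)
  rwa [intervalIntegral.integral_const, smul_eq_mul, mul_comm] at h1

lemma Gfun_ub (κ : ℝ) (hκ : 0 < κ) {a b : ℝ} (hab : a ≤ b) :
    Gfun κ b - Gfun κ a ≤ b - a := by
  rw [Gfun_sub κ hκ a b]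
  have h1 : ∫ s in a..b, gfun κ s ≤ ∫ _ in a..b, (1:ℝ) :=
    intervalIntegral.integral_mono_on hab (gfun_intble κ hκ a b) intervalIntegrable_const
      (fun x _ => gfun_le_one κ hκ x)
  rwa [intervalIntegral.integral_const, smul_eq_mul, mul_one] at h1

lemma Gfun_zero (κ : ℝ) : Gfun κ 0 = 0 := by
  unfold Gfun; simp

lemma Gfun_strictMono (κ : ℝ) (hκ : 0 < κ) : StrictMono (Gfun κ) := by
  intro x y hxy
  have := Gfun_lb κ hκ hxy.le
  have h6 : 0 < Real.sqrt (1 / 6) := Real.sqrt_pos.mpr (by norm_num)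
  nlinarith

lemma Gfun_lipschitz (κ : ℝ) (hκ : 0 < κ) : LipschitzWith 1 (Gfun κ) := by
  apply LipschitzWith.of_dist_le_mul
  intro x y
  rw [Real.dist_eq, Real.dist_eq]
  have h := Gfun_sub κ hκ y x
  rw [h]
  have : |∫ s in y..x, gfun κ s| ≤ 1 * |x - y| := by
    rw [← Real.norm_eq_abs (∫ s in y..x, gfun κ s)]
    apply intervalIntegral.norm_integral_le_of_norm_le_const
    intro z _
    rw [Real.norm_eq_abs, abs_of_pos (gfun_pos κ hκ z)]
    exact gfun_le_one κ hκ z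
  simpa using this

lemma Gfun_surj (κ : ℝ) (hκ : 0 < κ) : Function.Surjective (Gfun κ) := by
  have h6 : 0 < Real.sqrt (1 / 6) := Real.sqrt_pos.mpr (by norm_num)
  apply Continuous.surjective (Gfun_lipschitz κ hκ).continuous
  · apply tendsto_atTop_mono' _ _ (tendsto_id.const_mul_atTop h6)
    filter_upwards [eventually_ge_atTop (0:ℝ)] with s hs
    have := Gfun_lb κ hκ hs
    rw [Gfun_zero κ] at this
    simp only [id]
    linarith
  · apply tendsto_atBot_mono' _ _ (tendsto_id.const_mul_atBot h6)
    filter_upwards [eventually_le_atBot (0:ℝ)] with s hs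
    have := Gfun_lb κ hκ (show s ≤ 0 from hs)
    rw [Gfun_zero κ] at this
    simp only [id]
    linarith

lemma Gfun_Ginv (κ : ℝ) (hκ : 0 < κ) (t : ℝ) : Gfun κ (Ginv κ t) = t :=
  Function.invFun_eq (Gfun_surj κ hκ t)

lemma Ginv_tendsto (κ : ℝ) (hκ : 0 < κ) : Tendsto (Ginv κ) atTop atTop := by
  rw [tendsto_atTop]
  intro M
  filter_upwards [eventually_ge_atTop (Gfun κ M)] with t ht
  by_contra h
  push_neg at h
  have h2 := Gfun_strictMono κ hκ h
  rw [Gfun_Ginv κ hκ t] at h2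
  linarith

lemma f_diff (f : ℝ → ℝ) (hf1 : ContDiffOn ℝ 1 f (Set.Ici (0 : ℝ))) {s : ℝ} (hs : 0 < s) :
    DifferentiableAt ℝ f s := by
  have h1 : Set.Ici (0:ℝ) ∈ 𝓝 s :=
    mem_of_superset (Ioi_mem_nhds hs) Set.Ioi_subset_Ici_self
  exact ((hf1 s (le_of_lt hs)).contDiffAt h1).differentiableAt one_ne_zero

/-- under (F1)-(F2), `f (G⁻¹ t) / (t * g (G⁻¹ t)) → +∞` as `t → +∞`. -/
theorem stmt_18 (N : ℕ) (hN : 3 ≤ N) (f : ℝ → ℝ)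
    (hf1 : ContDiffOn ℝ 1 f (Set.Ici (0 : ℝ))) (hf0 : f 0 = 0)
    (hfpos : ∀ s : ℝ, 0 < s → 0 < f s)
    (α β μ₁ μ₂ : ℝ)
    (hα : 2 < α ∧ α < 2 * N / (N - 2)) (hβ : 2 < β ∧ β < 2 * N / (N - 2))
    (hμ₁ : 0 < μ₁) (hμ₂ : 0 < μ₂)
    (hd0 : Tendsto (fun t : ℝ => deriv f t / t ^ (α - 2)) (𝓝[>] (0 : ℝ))
      (𝓝 (μ₁ * (α - 1))))
    (hdinf : Tendsto (fun t : ℝ => deriv f t / t ^ (β - 2)) atTop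
      (𝓝 (μ₂ * (β - 1))))
    (κ : ℝ) (hκ : 0 < κ) :
    Tendsto (fun t : ℝ => f (Ginv κ t) / (t * gfun κ (Ginv κ t))) atTop atTop := by
  -- Step 1: deriv f → atTop
  have hβ2 : (0:ℝ) < β - 2 := by linarith [hβ.1]
  have hderiv : Tendsto (deriv f) atTop atTop := by
    have h1 : Tendsto (fun t : ℝ => deriv f t / t ^ (β - 2) * t ^ (β - 2)) atTop atTop :=
      hdinf.pos_mul_atTop (by nlinarith [hβ.1]) (tendsto_rpow_atTop hβ2)
    apply h1.congr'
    filter_upwards [eventually_gt_atTop (0:ℝ)] with t ht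
    rw [div_mul_cancel₀]
    exact (Real.rpow_pos_of_pos ht _).ne'
  -- Step 2: f s / s → atTop
  have hfs : Tendsto (fun s : ℝ => f s / s) atTop atTop := by
    rw [tendsto_atTop]
    intro C
    set M : ℝ := max C 0 + 1 with hMdef
    have hM0 : 0 < M := by positivity
    obtain ⟨T0, hT0⟩ := (tendsto_atTop.mp hderiv M).exists_forall_of_atTop
    set T : ℝ := max T0 1 with hTdef
    have hT1 : (1:ℝ) ≤ T := le_max_right _ _
    have hTpos : 0 < T := lt_of_lt_of_le one_pos hT1
    have hTprop : ∀ t ≥ T, M ≤ deriv f t := fun t ht =>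
      hT0 t (le_trans (le_max_left _ _) ht)
    -- f s - M s monotone on Ici T
    have hmono : MonotoneOn (fun s => f s - M * s) (Set.Ici T) := by
      apply monotoneOn_of_deriv_nonneg (convex_Ici T)
      · intro x hx
        have hx0 : 0 < x := lt_of_lt_of_le hTpos hx
        exact ((f_diff f hf1 hx0).sub ((differentiableAt_id.const_mul M))).continuousAt.continuousWithinAt
      · intro x hx
        rw [interior_Ici] at hx
        have hx0 : 0 < x := lt_trans hTpos hx
        exact ((f_diff f hf1 hx0).sub ((differentiableAt_id.const_mul M))).differentiableWithinAt
      · intro x hx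
        rw [interior_Ici] at hx
        have hx0 : 0 < x := lt_trans hTpos hx
        have hD : HasDerivAt (fun s : ℝ => f s - M * s) (deriv f x - M * 1) x :=
          (f_diff f hf1 hx0).hasDerivAt.sub ((hasDerivAt_id x).const_mul M)
        rw [hD.deriv]
        have := hTprop x (le_of_lt hx)
        nlinarith
    set c : ℝ := f T - M * T with hc
    filter_upwards [eventually_ge_atTop (max T (|c| + 1))] with s hsge
    have hsT : T ≤ s := le_trans (le_max_left _ _) hsge
    have hsc : |c| + 1 ≤ s := le_trans (le_max_right _ _) hsge
    have hspos : 0 < s := lt_of_lt_of_le hTpos hsT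
    have h1 : c ≤ f s - M * s := hmono (Set.self_mem_Ici) hsT hsT
    have h2 : -s ≤ c := by
      have := neg_abs_le c
      linarith
    have h3 : M * s - s ≤ f s := by linarith
    rw [le_div_iff₀ hspos]
    have hCM : C ≤ M - 1 := by
      rw [hMdef]
      have := le_max_left C 0
      linarith
    calc C * s ≤ (M - 1) * s := by nlinarith
      _ = M * s - s := by ring
      _ ≤ f s := h3
  -- Step 3: combine
  have hGinv := Ginv_tendsto κ hκ
  have hcomp : Tendsto (fun t : ℝ => f (Ginv κ t) / (Ginv κ t)) atTop atTop :=
    hfs.comp hGinv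
  apply tendsto_atTop_mono' atTop _ hcomp
  filter_upwards [hGinv.eventually_gt_atTop 0, eventually_gt_atTop (0:ℝ)] with t hs ht
  set s := Ginv κ t with hsdef
  have hgs := gfun_pos κ hκ s
  have hg1 := gfun_le_one κ hκ s
  have hts : t ≤ s := by
    have h1 := Gfun_ub κ hκ hs.le
    rw [Gfun_zero κ] at h1
    have h2 := Gfun_Ginv κ hκ t
    rw [← hsdef] at h2
    linarith
  have htg : t * gfun κ s ≤ s := by nlinarith
  have htgpos : 0 < t * gfun κ s := by positivity
  have hf := (hfpos s hs).le
  exact div_le_div_of_nonneg_left hf htgpos htg
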